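/- Fix z > 0 and λ ≥ 0, and let m₀ = (1/8)·[z² − 2λ + 1 + √(z⁴ + (12λ+2)z² + 4λ² + 12λ + 1)]. Then the function G(m) = √((2m+λ)²/(m+λ) − 1) − √(λ(2m+λ)/(m+λ)) is strictly increasing on the interval [m₀, ∞). -/

import Mathlib

open Real

set_option maxHeartbeats 1000000 in
/-- Fix `z > 0`, `λ ≥ 0`, and let
`m₀ = (1/8)[z² - 2λ + 1 + √(z⁴ + (12λ+2)z² + 4λ² + 12λ + 1)]`.  Then
`G m = √((2m+λ)²/(m+λ) - 1) - √(λ(2m+λ)/(m+λ))` is strictly increasing on `[m₀, ∞)`. -/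
theorem stmt9_G_strictMonoOn
    (z lam : ℝ) (hz : 0 < z) (hlam : 0 ≤ lam)
    (G : ℝ → ℝ)
    (hG : G = fun m => Real.sqrt ((2 * m + lam) ^ 2 / (m + lam) - 1) -
      Real.sqrt (lam * (2 * m + lam) / (m + lam)))
    (m₀ : ℝ)
    (hm₀ : m₀ = (1 / 8) * (z ^ 2 - 2 * lam + 1 +
      Real.sqrt (z ^ 4 + (12 * lam + 2) * z ^ 2 + 4 * lam ^ 2 + 12 * lam + 1))) :
    StrictMonoOn G (Set.Ici m₀) := by
  subst hG
  set s := Real.sqrt (z ^ 4 + (12 * lam + 2) * z ^ 2 + 4 * lam ^ 2 + 12 * lam + 1) with hs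
  have hsnn : 0 ≤ s := Real.sqrt_nonneg _
  have hs2 : s ^ 2 = z ^ 4 + (12 * lam + 2) * z ^ 2 + 4 * lam ^ 2 + 12 * lam + 1 := by
    rw [hs, sq_sqrt]
    nlinarith [sq_nonneg z, sq_nonneg (z ^ 2), sq_nonneg lam]
  have hm0 : (1 : ℝ) / 4 < m₀ := by
    have h1 : (1 + 2 * lam - z ^ 2) ^ 2 < s ^ 2 := by
      rw [hs2]; nlinarith [pow_pos hz 2, sq_nonneg z]
    have h2 : 1 + 2 * lam - z ^ 2 < s := by nlinarith
    rw [hm₀]; linarith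
  -- positivity of the first radicand for all x > 1/4
  have hfpos : ∀ x : ℝ, m₀ ≤ x → 0 < (2 * x + lam) ^ 2 / (x + lam) - 1 := by
    intro x hx
    have hx4 : (1 : ℝ) / 4 < x := lt_of_lt_of_le hm0 hx
    have hq : 0 < x + lam := by linarith
    have hnum : x + lam < (2 * x + lam) ^ 2 := by nlinarith [sq_nonneg lam, mul_nonneg hlam (le_of_lt (show (0:ℝ) < x - 1/4 by linarith)), sq_nonneg (x - 1/4)]
    have : 1 < (2 * x + lam) ^ 2 / (x + lam) := (one_lt_div hq).2 hnum
    linarith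
  rcases eq_or_lt_of_le hlam with hlam0 | hlam'
  · -- lam = 0
    intro a ha b hb hab
    have ha4 : (1 : ℝ) / 4 < a := lt_of_lt_of_le hm0 ha
    have hb4 : (1 : ℝ) / 4 < b := lt_of_lt_of_le hm0 hb
    simp only [← hlam0, add_zero, mul_zero, zero_mul, zero_div, Real.sqrt_zero, sub_zero]
    have ea : (2 * a) ^ 2 / a - 1 = 4 * a - 1 := by field_simp; ring
    have eb : (2 * b) ^ 2 / b - 1 = 4 * b - 1 := by field_simp; ring
    rw [ea, eb]
    exact Real.sqrt_lt_sqrt (by linarith) (by linarith)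
  · -- lam > 0
    apply strictMonoOn_of_deriv_pos (convex_Ici m₀)
    · -- continuity
      have hqne : ∀ x ∈ Set.Ici m₀, x + lam ≠ 0 := by
        intro x hx
        have : (1 : ℝ) / 4 < x := lt_of_lt_of_le hm0 hx
        positivity
      apply ContinuousOn.sub
      · exact Real.continuous_sqrt.comp_continuousOn
          (ContinuousOn.sub (ContinuousOn.div (by fun_prop) (by fun_prop) hqne) continuousOn_const)
      · exact Real.continuous_sqrt.comp_continuousOn
          (ContinuousOn.div (by fun_prop) (by fun_prop) hqne)
    · intro x hx
      rw [interior_Ici] at hx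
      have hx4 : (1 : ℝ) / 4 < x := lt_trans hm0 hx
      have hq : 0 < x + lam := by linarith
      have hp : 0 < 2 * x + lam := by linarith
      have hfx : 0 < (2 * x + lam) ^ 2 / (x + lam) - 1 := hfpos x (le_of_lt hx)
      have hgx : 0 < lam * (2 * x + lam) / (x + lam) := by positivity
      set sa := Real.sqrt ((2 * x + lam) ^ 2 / (x + lam) - 1) with hsa
      set sb := Real.sqrt (lam * (2 * x + lam) / (x + lam)) with hsb
      have hsap : 0 < sa := Real.sqrt_pos.2 hfx
      have hsbp : 0 < sb := Real.sqrt_pos.2 hgx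
      have hsa2 : sa ^ 2 = (2 * x + lam) ^ 2 / (x + lam) - 1 := Real.sq_sqrt hfx.le
      have hsb2 : sb ^ 2 = lam * (2 * x + lam) / (x + lam) := Real.sq_sqrt hgx.le
      -- derivatives
      have h1 : HasDerivAt (fun m : ℝ => 2 * m + lam) 2 x := by
        simpa using ((hasDerivAt_id x).const_mul 2).add_const lam
      have h3 : HasDerivAt (fun m : ℝ => m + lam) 1 x := (hasDerivAt_id x).add_const lam
      have hA : HasDerivAt (fun m : ℝ => (2 * m + lam) ^ 2 / (m + lam) - 1)
          ((((2:ℕ) * (2 * x + lam) ^ (2 - 1) * 2) * (x + lam) - (2 * x + lam) ^ 2 * 1) / (x + lam) ^ 2) x :=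
        ((h1.pow 2).div h3 hq.ne').sub_const 1
      have hB : HasDerivAt (fun m : ℝ => lam * (2 * m + lam) / (m + lam))
          (((lam * 2) * (x + lam) - lam * (2 * x + lam) * 1) / (x + lam) ^ 2) x :=
        (h1.const_mul lam).div h3 hq.ne'
      have H : HasDerivAt (fun m : ℝ => Real.sqrt ((2 * m + lam) ^ 2 / (m + lam) - 1) -
          Real.sqrt (lam * (2 * m + lam) / (m + lam)))
          (((2 * x + lam) * (2 * x + 3 * lam) / (x + lam) ^ 2) / (2 * sa) -
           (lam ^ 2 / (x + lam) ^ 2) / (2 * sb)) x := by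
        have := (hA.sqrt hfx.ne').sub (hB.sqrt hgx.ne')
        refine this.congr_deriv ?_
        rw [← hsa, ← hsb]
        push_cast
        ring
      rw [H.deriv, sub_pos]
      have key : lam ^ 2 * sa < (2 * x + lam) * (2 * x + 3 * lam) * sb := by
        have hR : 0 ≤ (2 * x + lam) * (2 * x + 3 * lam) * sb := by positivity
        refine lt_of_pow_lt_pow_left₀ 2 hR ?_
        have e1 : (lam ^ 2 * sa) ^ 2 = lam ^ 4 * ((2 * x + lam) ^ 2 / (x + lam) - 1) := by
          rw [mul_pow, hsa2]; ring
        have e2 : ((2 * x + lam) * (2 * x + 3 * lam) * sb) ^ 2 =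
            ((2 * x + lam) * (2 * x + 3 * lam)) ^ 2 * (lam * (2 * x + lam) / (x + lam)) := by
          rw [mul_pow, hsb2]
        rw [e1, e2]
        rw [div_sub' hq.ne', ← mul_div_assoc, ← mul_div_assoc,
          div_lt_div_iff₀ hq hq]
        -- polynomial inequality
        have k1 : 0 < lam ^ 4 * (x + lam) := by positivity
        have k2 : lam ^ 3 * (2 * x + lam) ^ 2 * lam < lam ^ 3 * (2 * x + lam) ^ 2 * (2 * x + lam) :=
          mul_lt_mul_of_pos_left (show lam < 2 * x + lam by linarith)
            (show (0:ℝ) < lam ^ 3 * (2 * x + lam) ^ 2 by positivity)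
        have k3 : lam * (2 * x + lam) ^ 3 * lam ^ 2 <
            lam * (2 * x + lam) ^ 3 * (2 * x + 3 * lam) ^ 2 :=
          mul_lt_mul_of_pos_left
            (by nlinarith : lam ^ 2 < (2 * x + 3 * lam) ^ 2)
            (show (0:ℝ) < lam * (2 * x + lam) ^ 3 by positivity)
        have key2 : lam ^ 4 * ((2 * x + lam) ^ 2 - (x + lam) * 1) <
            ((2 * x + lam) * (2 * x + 3 * lam)) ^ 2 * (lam * (2 * x + lam)) := by nlinarith [k1, k2, k3]
        have := mul_lt_mul_of_pos_right key2 hq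
        linarith [this]
      rw [div_div, div_div, div_lt_div_iff₀ (by positivity) (by positivity)]
      have := mul_lt_mul_of_pos_left key (show (0:ℝ) < 2 * (x + lam) ^ 2 by positivity)
      linarith [this]
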